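/- arXiv:1301.2498 — 4 statements merged into one kernel-verified Lean document; each statement's English description precedes it below -/
import Mathlib

section
/- A sequence $\mathbf{y}$ is idiosyncratic if and only if the limit $\lambda_1(\Sigma) = \lim_n \lambda_{n,1}(\Sigma_n)$ of the top eigenvalues of its covariance sections is finite. -/
open Filter MeasureTheory

/-- `y` is idiosyncratic: for every averaging sequence `(aₙ) ⊂ ℓ² ∩ ℓ²(Σ)`
(i.e. `aₙ ∈ ℓ²`, `‖aₙ‖₂ → 0`, and each `aₙ⊤y` is defined as the `L²`-limit `z n`
of its partial sums), the random variables `aₙ⊤y = z n` tend to `0` in `L²`. -/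
def Idiosyncratic {Ω : Type*} [MeasurableSpace Ω] {μ : Measure Ω}
    (y : ℕ → Lp ℝ 2 μ) : Prop :=
  ∀ (a : ℕ → ℕ → ℝ) (z : ℕ → Lp ℝ 2 μ),
    (∀ n, Memℓp (a n) 2) →
    Tendsto (fun n => ∑' k, (a n k) ^ 2) atTop (nhds 0) →
    (∀ n, Tendsto (fun N => ∑ k ∈ Finset.range N, a n k • y k) atTop (nhds (z n))) →
    Tendsto z atTop (nhds 0)

/-- a zero-mean finite-variance sequence `y` (with positive definite
covariance sections) is idiosyncratic if and only if the (nondecreasing) limit of the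
top eigenvalues of its covariance sections is finite, i.e. the quadratic forms of the
sections are uniformly bounded: `‖∑ x k • y k‖² ≤ M ∑ x k²` for some `M`. -/
theorem idiosyncratic_iff_finite_top_eigenvalue
    {Ω : Type*} [MeasurableSpace Ω] (μ : Measure Ω) [IsProbabilityMeasure μ]
    (y : ℕ → Lp ℝ 2 μ)
    (hmean : ∀ k, ∫ ω, (y k : Ω → ℝ) ω ∂μ = 0)
    (hposdef : ∀ (n : ℕ) (x : ℕ → ℝ), (∃ k ∈ Finset.range n, x k ≠ 0) →
      0 < ‖∑ k ∈ Finset.range n, x k • y k‖) :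
    Idiosyncratic y ↔
      ∃ M : ℝ, ∀ (n : ℕ) (x : ℕ → ℝ),
        ‖∑ k ∈ Finset.range n, x k • y k‖ ^ 2 ≤ M * ∑ k ∈ Finset.range n, x k ^ 2 := by
  constructor
  · -- idiosyncratic → bounded
    intro hid
    by_contra hM
    push_neg at hM
    -- for each m pick witnesses
    choose n x hx using fun m : ℕ => hM (m + 1 : ℕ)
    set S : ℕ → Lp ℝ 2 μ := fun m => ∑ k ∈ Finset.range (n m), x m k • y k with hS
    have hc : ∀ m, 0 < ‖S m‖ ^ 2 := by
      intro m
      have h1 : (0:ℝ) ≤ ((m:ℝ) + 1) * ∑ k ∈ Finset.range (n m), x m k ^ 2 := by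
        have : (0:ℝ) ≤ ∑ k ∈ Finset.range (n m), x m k ^ 2 :=
          Finset.sum_nonneg fun k _ => sq_nonneg _
        positivity
      have := hx m
      push_cast at this
      linarith
    have hcpos : ∀ m, 0 < ‖S m‖ := fun m => by
      nlinarith [hc m, norm_nonneg (S m)]
    set a : ℕ → ℕ → ℝ := fun m k => if k < n m then x m k / ‖S m‖ else 0 with ha
    set z : ℕ → Lp ℝ 2 μ := fun m => (‖S m‖)⁻¹ • S m with hz
    have hzero : ∀ m k, k ∉ Finset.range (n m) → a m k = 0 := by
      intro m k hk
      simp only [Finset.mem_range, not_lt] at hk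
      simp [ha, Nat.not_lt.mpr hk]
    have hsum : ∀ m, ∑' k, (a m k) ^ 2
        = (∑ k ∈ Finset.range (n m), x m k ^ 2) / ‖S m‖ ^ 2 := by
      intro m
      rw [tsum_eq_sum (s := Finset.range (n m)) (fun k hk => by rw [hzero m k hk]; ring)]
      rw [Finset.sum_div]
      refine Finset.sum_congr rfl fun k hk => ?_
      simp only [Finset.mem_range] at hk
      simp [ha, hk, div_pow]
    have hmem : ∀ m, Memℓp (a m) 2 := by
      intro m
      apply memℓp_gen
      apply summable_of_ne_finset_zero (s := Finset.range (n m))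
      intro k hk
      rw [hzero m k hk]
      simp
    have htend : Tendsto (fun m => ∑' k, (a m k) ^ 2) atTop (nhds 0) := by
      have hle : ∀ m : ℕ, ∑' k, (a m k) ^ 2 ≤ 1 / ((m:ℝ) + 1) := by
        intro m
        rw [hsum m]
        rw [div_le_div_iff₀ (hc m) (by positivity)]
        have := hx m
        push_cast at this
        nlinarith [hc m]
      have hge : ∀ m : ℕ, 0 ≤ ∑' k, (a m k) ^ 2 := fun m =>
        tsum_nonneg fun k => sq_nonneg _
      exact squeeze_zero hge hle tendsto_one_div_add_atTop_nhds_zero_nat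
    have hpart : ∀ m, Tendsto (fun N => ∑ k ∈ Finset.range N, a m k • y k)
        atTop (nhds (z m)) := by
      intro m
      apply tendsto_atTop_of_eventually_const (i₀ := n m)
      intro N hN
      have hsub : Finset.range (n m) ⊆ Finset.range N := Finset.range_subset_range.mpr hN
      rw [← Finset.sum_subset hsub (fun k _ hk => by rw [hzero m k hk, zero_smul])]
      simp only [hz, hS]
      rw [Finset.smul_sum]
      refine Finset.sum_congr rfl fun k hk => ?_
      simp only [Finset.mem_range] at hk
      simp [ha, hk, div_eq_inv_mul, mul_smul]
      rfl
    have := hid a z hmem htend hpart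
    have hnorm : Tendsto (fun m => ‖z m‖) atTop (nhds 0) := by
      simpa using this.norm
    have hone : ∀ m, ‖z m‖ = 1 := by
      intro m
      rw [hz]
      simp only [norm_smul, norm_inv, norm_norm]
      rw [inv_mul_cancel₀ (hcpos m).ne']
    rw [funext hone] at hnorm
    have : (1:ℝ) = 0 := tendsto_nhds_unique tendsto_const_nhds hnorm
    norm_num at this
  · -- bounded → idiosyncratic
    rintro ⟨M, hM⟩ a z ha htend hz
    have hsummable : ∀ n, Summable fun k => (a n k) ^ 2 := by
      intro n
      have := (memℓp_gen_iff (p := 2) (by norm_num)).1 (ha n)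
      simpa [Real.rpow_natCast, sq_abs] using this
    have key : ∀ n, ‖z n‖ ^ 2 ≤ |M| * ∑' k, (a n k) ^ 2 := by
      intro n
      have hlim : Tendsto (fun N => ‖∑ k ∈ Finset.range N, a n k • y k‖ ^ 2)
          atTop (nhds (‖z n‖ ^ 2)) := ((hz n).norm).pow 2
      refine le_of_tendsto hlim (Eventually.of_forall fun N => ?_)
      calc ‖∑ k ∈ Finset.range N, a n k • y k‖ ^ 2
          ≤ M * ∑ k ∈ Finset.range N, a n k ^ 2 := hM N (a n)
        _ ≤ |M| * ∑ k ∈ Finset.range N, a n k ^ 2 := by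
            apply mul_le_mul_of_nonneg_right (le_abs_self M)
            exact Finset.sum_nonneg fun k _ => sq_nonneg _
        _ ≤ |M| * ∑' k, (a n k) ^ 2 := by
            apply mul_le_mul_of_nonneg_left _ (abs_nonneg M)
            exact Summable.sum_le_tsum _ (fun k _ => sq_nonneg _) (hsummable n)
    have hsq : Tendsto (fun n => ‖z n‖ ^ 2) atTop (nhds 0) := by
      have h2 : Tendsto (fun n => |M| * ∑' k, (a n k) ^ 2) atTop (nhds 0) := by
        simpa using htend.const_mul |M|
      exact squeeze_zero (fun n => sq_nonneg _) key h2
    have hnorm : Tendsto (fun n => ‖z n‖) atTop (nhds 0) := by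
      have := (Real.continuous_sqrt.tendsto 0).comp hsq
      simpa [Function.comp_def, Real.sqrt_sq (norm_nonneg _)] using this
    exact tendsto_zero_iff_norm_tendsto_zero.mpr hnorm
end

section
/- Let $\mathbf{y}(k) = \lambda^k \mathbf{x}$ for a fixed zero-mean random variable $\mathbf{x}$ with variance $\sigma^2 > 0$ and $|\lambda| < 1$. Then the covariance sections $\Sigma_n$ all have rank one, and the limit of the top eigenvalue equals $\sigma^2 \lambda^2/(1-\lambda^2) < \infty$; consequently $\mathbf{y}$ is idiosyncratic even though it is purely deterministic of rank 1. -/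
open Filter MeasureTheory Matrix
open scoped RealInnerProductSpace

/-- for `y(k) = λᵏ x` (`k ≥ 1`) with `x` zero-mean of variance `σ² > 0`
and `0 < |λ| < 1`, all covariance sections `Σₙ` have rank one, the limit of the top
eigenvalue (equal to the trace, since the rank is one) is `σ²λ²/(1-λ²) < ∞`, and
consequently `y` is idiosyncratic even though it is purely deterministic of rank 1. -/
theorem geometric_PD_sequence_idiosyncratic
    {Ω : Type*} [MeasurableSpace Ω] (μ : Measure Ω) [IsProbabilityMeasure μ]
    (x : Lp ℝ 2 μ) (σ2 lam : ℝ)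
    (hmean : ∫ ω, (x : Ω → ℝ) ω ∂μ = 0)
    (hvar : ‖x‖ ^ 2 = σ2) (hσ : 0 < σ2)
    (hlam0 : lam ≠ 0) (hlam1 : |lam| < 1)
    (y : ℕ → Lp ℝ 2 μ)
    (hy : ∀ k : ℕ, 1 ≤ k → y k = lam ^ k • x) :
    (∀ n : ℕ, 1 ≤ n →
      (Matrix.of fun i j : Fin n => ⟪y ((i : ℕ) + 1), y ((j : ℕ) + 1)⟫).rank = 1) ∧
    Tendsto (fun n : ℕ =>
        (Matrix.of fun i j : Fin n => ⟪y ((i : ℕ) + 1), y ((j : ℕ) + 1)⟫).trace)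
      atTop (nhds (σ2 * lam ^ 2 / (1 - lam ^ 2))) ∧
    (∀ (a : ℕ → ℕ → ℝ) (z : ℕ → Lp ℝ 2 μ),
      (∀ n, Memℓp (a n) 2) →
      Tendsto (fun n => ∑' k, (a n k) ^ 2) atTop (nhds 0) →
      (∀ n, Tendsto (fun N => ∑ k ∈ Finset.range N, a n k • y k) atTop (nhds (z n))) →
      Tendsto z atTop (nhds 0)) := by
  have hsq1 : lam ^ 2 < 1 := by
    have := abs_lt.mp hlam1
    nlinarith
  have hsq0 : (0:ℝ) ≤ lam ^ 2 := sq_nonneg _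
  have hentry : ∀ (n : ℕ) (i j : Fin n),
      (Matrix.of fun i j : Fin n => ⟪y ((i : ℕ) + 1), y ((j : ℕ) + 1)⟫) i j
        = σ2 * (lam ^ ((i : ℕ) + 1) * lam ^ ((j : ℕ) + 1)) := by
    intro n i j
    simp only [Matrix.of_apply]
    rw [hy _ (Nat.le_add_left 1 _), hy _ (Nat.le_add_left 1 _),
      real_inner_smul_left, real_inner_smul_right, real_inner_self_eq_norm_sq, hvar]
    ring
  refine ⟨?_, ?_, ?_⟩
  · -- rank one
    intro n hn
    set M : Matrix (Fin n) (Fin n) ℝ :=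
      Matrix.of fun i j : Fin n => ⟪y ((i : ℕ) + 1), y ((j : ℕ) + 1)⟫ with hM
    have hfac : M = (Matrix.of fun (i : Fin n) (_ : Fin 1) => σ2 * lam ^ ((i : ℕ) + 1))
        * (Matrix.of fun (_ : Fin 1) (j : Fin n) => lam ^ ((j : ℕ) + 1)) := by
      ext i j
      rw [hM, hentry n i j]
      simp [Matrix.mul_apply, mul_assoc]
    have hle : M.rank ≤ 1 := by
      rw [hfac]
      calc (_ * _ : Matrix (Fin n) (Fin n) ℝ).rank
          ≤ (Matrix.of fun (_ : Fin 1) (j : Fin n) => lam ^ ((j : ℕ) + 1)).rank :=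
            Matrix.rank_mul_le_right _ _
        _ ≤ Fintype.card (Fin 1) := Matrix.rank_le_card_height _
        _ = 1 := by simp
    have hpos : 0 < M.rank := by
      rw [Matrix.rank]
      rw [Module.finrank_pos_iff_exists_ne_zero]
      have i0 : Fin n := ⟨0, hn⟩
      refine ⟨⟨M.mulVecLin (Pi.single i0 1), LinearMap.mem_range_self _ _⟩, ?_⟩
      intro hcon
      have h2 : M.mulVecLin (Pi.single i0 1) = 0 := by
        simpa using congrArg Subtype.val hcon
      have h3 := congrFun h2 i0
      rw [Matrix.mulVecLin_apply, Matrix.mulVec_single] at h3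
      simp only [MulOpposite.op_one, Pi.zero_apply, one_smul, Matrix.col_apply] at h3
      rw [hM, hentry n i0 i0] at h3
      have : lam ^ ((i0 : ℕ) + 1) ≠ 0 := pow_ne_zero _ hlam0
      exact absurd h3 (by positivity)
    omega
  · -- trace
    have hgeo : HasSum (fun k : ℕ => σ2 * lam ^ 2 * (lam ^ 2) ^ k)
        (σ2 * lam ^ 2 * (1 - lam ^ 2)⁻¹) :=
      (hasSum_geometric_of_lt_one hsq0 hsq1).mul_left _
    have := hgeo.tendsto_sum_nat
    rw [show σ2 * lam ^ 2 * (1 - lam ^ 2)⁻¹ = σ2 * lam ^ 2 / (1 - lam ^ 2) from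
      (div_eq_mul_inv _ _).symm] at this
    have htr : ∀ n : ℕ, (Matrix.of fun i j : Fin n =>
        ⟪y ((i : ℕ) + 1), y ((j : ℕ) + 1)⟫).trace
        = ∑ k ∈ Finset.range n, σ2 * lam ^ 2 * (lam ^ 2) ^ k := by
      intro n
      rw [Matrix.trace, ← Fin.sum_univ_eq_sum_range
        (fun k => σ2 * lam ^ 2 * (lam ^ 2) ^ k) n]
      refine Finset.sum_congr rfl fun i _ => ?_
      have hexp : (i:ℕ) + 1 + ((i:ℕ) + 1) = 2 + 2*(i:ℕ) := by ring
      rw [Matrix.diag_apply, hentry n i i, ← pow_add, hexp, pow_add, pow_mul]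
      ring
    exact (tendsto_congr htr).mpr this
  · -- idiosyncratic
    intro a z hmem hT hz
    have hsumm : ∀ n, Summable fun k => (a n k) ^ 2 := by
      intro n
      have h2 : (0:ℝ) < (2 : ENNReal).toReal := by norm_num
      have := (hmem n).summable h2
      refine this.congr fun k => ?_
      have : ((2 : ENNReal).toReal) = ((2 : ℕ) : ℝ) := by norm_num
      rw [this, Real.rpow_natCast, Real.norm_eq_abs, sq_abs]
    set T : ℕ → ℝ := fun n => ∑' k, (a n k) ^ 2 with hTdef
    have hT0 : ∀ n, 0 ≤ T n := fun n => tsum_nonneg fun k => sq_nonneg _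
    have hgeoS : Summable fun k : ℕ => (lam ^ 2) ^ k :=
      summable_geometric_of_lt_one hsq0 hsq1
    set S : ℝ := ∑' k : ℕ, (lam ^ 2) ^ k with hSdef
    have hS0 : 0 ≤ S := tsum_nonneg fun k => by positivity
    set C : ℝ := ‖y 0‖ + Real.sqrt S * ‖x‖ with hCdef
    have hC0 : 0 ≤ C := by positivity
    have key : ∀ n, ‖z n‖ ≤ Real.sqrt (T n) * C := by
      intro n
      refine le_of_tendsto (hz n).norm ?_
      filter_upwards [eventually_ge_atTop 1] with N hN
      have hsplit : (∑ k ∈ Finset.range N, a n k • y k)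
          = a n 0 • y 0 + (∑ k ∈ Finset.Ico 1 N, a n k * lam ^ k) • x := by
        rw [Finset.range_eq_Ico, Finset.sum_eq_sum_Ico_succ_bot hN]
        congr 1
        rw [Finset.sum_smul]
        refine Finset.sum_congr rfl fun k hk => ?_
        rw [hy k (Finset.mem_Ico.mp hk).1, smul_smul]
      rw [hsplit]
      have ha0 : |a n 0| ≤ Real.sqrt (T n) := by
        rw [← Real.sqrt_sq_eq_abs]
        exact Real.sqrt_le_sqrt (Summable.le_tsum (hsumm n) 0 fun k _ => sq_nonneg _)
      have hc : |∑ k ∈ Finset.Ico 1 N, a n k * lam ^ k|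
          ≤ Real.sqrt (T n) * Real.sqrt S := by
        have h1 : |∑ k ∈ Finset.Ico 1 N, a n k * lam ^ k|
            ≤ ∑ k ∈ Finset.Ico 1 N, |a n k| * |lam| ^ k := by
          refine (Finset.abs_sum_le_sum_abs _ _).trans (le_of_eq ?_)
          refine Finset.sum_congr rfl fun k _ => ?_
          rw [abs_mul, abs_pow]
        have h2 : (∑ k ∈ Finset.Ico 1 N, |a n k| * |lam| ^ k) ^ 2
            ≤ T n * S := by
          refine (Finset.sum_mul_sq_le_sq_mul_sq _ _ _).trans ?_
          have hA : (∑ k ∈ Finset.Ico 1 N, |a n k| ^ 2) ≤ T n := by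
            refine Summable.sum_le_tsum (L := SummationFilter.unconditional ℕ) _ (fun k _ => sq_nonneg _) ?_ |>.trans_eq ?_
            · exact (hsumm n).congr fun k => (sq_abs _).symm
            · exact tsum_congr fun k => sq_abs _
          have hB : (∑ k ∈ Finset.Ico 1 N, (|lam| ^ k) ^ 2) ≤ S := by
            have : ∀ k, (|lam| ^ k) ^ 2 = (lam ^ 2) ^ k := by
              intro k; rw [← pow_mul, mul_comm, pow_mul, sq_abs]
            simp_rw [this]
            exact Summable.sum_le_tsum _ (fun k _ => by positivity) hgeoS
          have hsum0 : (0:ℝ) ≤ ∑ k ∈ Finset.Ico 1 N, |a n k| ^ 2 :=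
            Finset.sum_nonneg fun k _ => sq_nonneg _
          exact mul_le_mul hA hB (Finset.sum_nonneg fun k _ => by positivity) (hT0 n)
        calc |∑ k ∈ Finset.Ico 1 N, a n k * lam ^ k|
            ≤ ∑ k ∈ Finset.Ico 1 N, |a n k| * |lam| ^ k := h1
          _ = Real.sqrt ((∑ k ∈ Finset.Ico 1 N, |a n k| * |lam| ^ k) ^ 2) := by
              rw [Real.sqrt_sq (Finset.sum_nonneg fun k _ => by positivity)]
          _ ≤ Real.sqrt (T n * S) := Real.sqrt_le_sqrt h2
          _ = Real.sqrt (T n) * Real.sqrt S := Real.sqrt_mul (hT0 n) _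
      calc ‖a n 0 • y 0 + (∑ k ∈ Finset.Ico 1 N, a n k * lam ^ k) • x‖
          ≤ ‖a n 0 • y 0‖ + ‖(∑ k ∈ Finset.Ico 1 N, a n k * lam ^ k) • x‖ :=
            norm_add_le _ _
        _ = |a n 0| * ‖y 0‖ + |∑ k ∈ Finset.Ico 1 N, a n k * lam ^ k| * ‖x‖ := by
            rw [norm_smul, norm_smul, Real.norm_eq_abs, Real.norm_eq_abs]
        _ ≤ Real.sqrt (T n) * ‖y 0‖ + (Real.sqrt (T n) * Real.sqrt S) * ‖x‖ := by
            exact add_le_add (mul_le_mul_of_nonneg_right ha0 (norm_nonneg _))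
              (mul_le_mul_of_nonneg_right hc (norm_nonneg _))
        _ = Real.sqrt (T n) * C := by rw [hCdef]; ring
    rw [tendsto_zero_iff_norm_tendsto_zero]
    refine squeeze_zero (fun n => norm_nonneg _) key ?_
    have h1 : Tendsto (fun n => Real.sqrt (T n)) atTop (nhds 0) := by
      have := (Real.continuous_sqrt.tendsto 0).comp hT
      simpa [Function.comp_def] using this
    simpa using h1.mul_const C
end

section
/- Let $\mathbf{y}(k) = \sum_{i=1}^q f_i(k)\mathbf{x}_i$ be a purely deterministic sequence of rank $q$ (with $\mathbf{x}$ orthonormal). Then all $q$ nonzero eigenvalues of the covariance sections $F^{n\top}F^n$ tend to $+\infty$ as $n \to \infty$ if and only if the vectors $f_1,\dots,f_q$ are strongly linearly independent, i.e., $\lim_n \|f_i^n - \Pi[f_i^n \mid \mathrm{span}\{f_j^n : j \neq i\}]\|_2 = +\infty$ for each $i$. -/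
open Filter Matrix

/-- The truncated loading matrix `Fⁿ = [f₁ⁿ … f_qⁿ] ∈ ℝ^{n×q}`. -/
def loadMat (q : ℕ) (f : Fin q → ℕ → ℝ) (n : ℕ) : Matrix (Fin n) (Fin q) ℝ :=
  Matrix.of fun k i => f i k

/-- The norm of the residual of `fᵢⁿ` after projecting onto
`span{fⱼⁿ : j ≠ i} ⊂ ℝⁿ`, i.e. the distance from `fᵢⁿ` to that span. -/
noncomputable def residNorm (q : ℕ) (f : Fin q → ℕ → ℝ) (i : Fin q) (n : ℕ) : ℝ :=
  ⨅ α : {j : Fin q // j ≠ i} → ℝ,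
    Real.sqrt (∑ k ∈ Finset.range n,
      (f i k - ∑ j : {j : Fin q // j ≠ i}, α j * f (j : Fin q) k) ^ 2)

lemma quad_eq (q : ℕ) (f : Fin q → ℕ → ℝ) (n : ℕ) (x : Fin q → ℝ) :
    x ⬝ᵥ ((loadMat q f n)ᵀ * loadMat q f n).mulVec x
      = ∑ k ∈ Finset.range n, (∑ i, x i * f i k) ^ 2 := by
  rw [← Matrix.mulVec_mulVec, Matrix.dotProduct_mulVec, Matrix.vecMul_transpose,
    ← Fin.sum_univ_eq_sum_range (fun k => (∑ i, x i * f i k) ^ 2) n]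
  refine Finset.sum_congr rfl fun k _ => ?_
  simp only [Matrix.mulVec, dotProduct, loadMat, Matrix.of_apply, sq]
  congr 1 <;> exact Finset.sum_congr rfl fun i _ => mul_comm _ _

lemma sum_split (q : ℕ) (f : Fin q → ℕ → ℝ) (i : Fin q) (c : ℝ)
    (α : {j : Fin q // j ≠ i} → ℝ) (k : ℕ) (x : Fin q → ℝ)
    (hxi : x i = c) (hxj : ∀ j (h : j ≠ i), x j = -(c * α ⟨j, h⟩)) :
    (∑ j, x j * f j k)
      = c * (f i k - ∑ j : {j : Fin q // j ≠ i}, α j * f (j : Fin q) k) := by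
  have key : ∀ g : Fin q → ℝ, ∑ j, g j = g i + ∑ j : {j : Fin q // j ≠ i}, g j := fun g => by
    rw [Fintype.sum_eq_add_sum_compl i,
      Finset.sum_subtype (p := fun j => j ≠ i) ({i}ᶜ) (fun x => by simp) g]
  rw [key (fun j => x j * f j k)]
  simp only [hxi]
  have h1 : ∑ j : {j : Fin q // j ≠ i}, x (j : Fin q) * f (j : Fin q) k
      = -(c * ∑ j : {j : Fin q // j ≠ i}, α j * f (j : Fin q) k) := by
    rw [Finset.mul_sum, ← Finset.sum_neg_distrib]
    refine Finset.sum_congr rfl fun j _ => ?_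
    rw [hxj j.1 j.2]
    simp only [Subtype.coe_eta]
    ring
  rw [h1]; ring

lemma residNorm_nonneg (q : ℕ) (f : Fin q → ℕ → ℝ) (i : Fin q) (n : ℕ) :
    0 ≤ residNorm q f i n :=
  Real.iInf_nonneg fun _ => Real.sqrt_nonneg _

lemma residNorm_bddBelow (q : ℕ) (f : Fin q → ℕ → ℝ) (i : Fin q) (n : ℕ) :
    BddBelow (Set.range fun α : {j : Fin q // j ≠ i} → ℝ =>
      Real.sqrt (∑ k ∈ Finset.range n,
      (f i k - ∑ j : {j : Fin q // j ≠ i}, α j * f (j : Fin q) k) ^ 2)) :=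
  ⟨0, by rintro y ⟨β, rfl⟩; exact Real.sqrt_nonneg _⟩

/-- for a purely deterministic sequence `y(k) = ∑ᵢ fᵢ(k) xᵢ` of rank `q`
(`x` orthonormal, `Fⁿ` of full column rank for all large `n`), all `q` nonzero
eigenvalues of the covariance sections — i.e. the eigenvalues of the Gram matrices
`Fⁿ⊤Fⁿ` — tend to `+∞` (equivalently the smallest eigenvalue of `Fⁿ⊤Fⁿ` does) if and
only if the vectors `f₁, …, f_q` are strongly linearly independent, i.e.
`‖fᵢⁿ - Π[fᵢⁿ ∣ span{fⱼⁿ : j ≠ i}]‖₂ → ∞` for each `i`. -/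
theorem q_aggregate_iff_strongly_linearly_independent
    (q : ℕ) (f : Fin q → ℕ → ℝ)
    (hrank : ∀ᶠ n in atTop, (loadMat q f n).rank = q) :
    (∀ C : ℝ, ∀ᶠ n in atTop, ∀ x : Fin q → ℝ,
        C * (∑ i, x i ^ 2) ≤ x ⬝ᵥ ((loadMat q f n)ᵀ * loadMat q f n).mulVec x) ↔
    (∀ i : Fin q, Tendsto (residNorm q f i) atTop atTop) := by
  constructor
  · -- forward direction
    intro hC i
    rw [tendsto_atTop]
    intro M
    filter_upwards [hC ((max M 0) ^ 2)] with n hn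
    refine le_trans (le_max_left M 0) (le_ciInf fun α => ?_)
    set x : Fin q → ℝ := fun j => if h : j = i then 1 else -(1 * α ⟨j, h⟩) with hx
    have h1 := hn x
    rw [quad_eq] at h1
    have h2 : ∑ k ∈ Finset.range n, (∑ j, x j * f j k) ^ 2
        = ∑ k ∈ Finset.range n,
          (f i k - ∑ j : {j : Fin q // j ≠ i}, α j * f (j : Fin q) k) ^ 2 := by
      refine Finset.sum_congr rfl fun k _ => ?_
      rw [sum_split q f i 1 α k x (dif_pos rfl) (fun j h => dif_neg h), one_mul]
    have hxi1 : x i ^ 2 = 1 := by simp [hx]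
    have hsum1 : 1 ≤ ∑ j, x j ^ 2 := by
      rw [← hxi1]
      exact Finset.single_le_sum (fun j _ => sq_nonneg (x j)) (Finset.mem_univ i)
    have h3 : (max M 0) ^ 2 ≤ ∑ k ∈ Finset.range n,
        (f i k - ∑ j : {j : Fin q // j ≠ i}, α j * f (j : Fin q) k) ^ 2 := by
      calc (max M 0) ^ 2 = (max M 0) ^ 2 * 1 := (mul_one _).symm
        _ ≤ (max M 0) ^ 2 * ∑ j, x j ^ 2 :=
            mul_le_mul_of_nonneg_left hsum1 (sq_nonneg _)
        _ ≤ _ := h1.trans_eq h2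
    calc max M 0 = Real.sqrt ((max M 0) ^ 2) := (Real.sqrt_sq (le_max_right M 0)).symm
      _ ≤ _ := Real.sqrt_le_sqrt h3
  · -- converse
    intro hres C
    rcases Nat.eq_zero_or_pos q with hq | hq
    · subst hq
      filter_upwards with n x
      rw [quad_eq]
      simp
    · have hev : ∀ᶠ n in atTop, ∀ i : Fin q,
          Real.sqrt (q * max C 0) ≤ residNorm q f i n :=
        eventually_all.2 fun i => (hres i).eventually_ge_atTop _
      filter_upwards [hev] with n hn x
      rw [quad_eq]
      obtain ⟨i, -, hi⟩ := Finset.exists_max_image Finset.univ (fun j => x j ^ 2)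
        ⟨⟨0, hq⟩, Finset.mem_univ _⟩
      by_cases hxi : x i = 0
      · have hall : ∀ j, x j = 0 := fun j => by
          have h := hi j (Finset.mem_univ j)
          rw [hxi] at h
          nlinarith [sq_nonneg (x j)]
        simp [hall]
      · set α : {j : Fin q // j ≠ i} → ℝ := fun j => -(x j / x i) with hα
        have hsum : ∀ k, ∑ j, x j * f j k
            = x i * (f i k - ∑ j : {j : Fin q // j ≠ i}, α j * f (j : Fin q) k) :=
          fun k => sum_split q f i (x i) α k x rfl (fun j h => by
            simp only [hα]
            field_simp)
        set S : ℝ := ∑ k ∈ Finset.range n,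
          (f i k - ∑ j : {j : Fin q // j ≠ i}, α j * f (j : Fin q) k) ^ 2 with hS
        have hq1 : ∑ k ∈ Finset.range n, (∑ j, x j * f j k) ^ 2 = x i ^ 2 * S := by
          rw [hS, Finset.mul_sum]
          exact Finset.sum_congr rfl fun k _ => by rw [hsum k]; ring
        have hSnn : 0 ≤ S := Finset.sum_nonneg fun k _ => sq_nonneg _
        have hresle : residNorm q f i n ≤ Real.sqrt S :=
          ciInf_le (residNorm_bddBelow q f i n) α
        have h0 : 0 ≤ residNorm q f i n := residNorm_nonneg q f i n
        have hM : Real.sqrt (q * max C 0) ≤ residNorm q f i n := hn i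
        have hqC : (0:ℝ) ≤ q * max C 0 :=
          mul_nonneg (Nat.cast_nonneg q) (le_max_right C 0)
        have hM2 : q * max C 0 ≤ residNorm q f i n ^ 2 := by
          calc (q:ℝ) * max C 0 = Real.sqrt (q * max C 0) ^ 2 := (Real.sq_sqrt hqC).symm
            _ ≤ residNorm q f i n ^ 2 := pow_le_pow_left₀ (Real.sqrt_nonneg _) hM 2
        have hr2 : residNorm q f i n ^ 2 ≤ S := by
          calc residNorm q f i n ^ 2 ≤ Real.sqrt S ^ 2 := pow_le_pow_left₀ h0 hresle 2
            _ = S := Real.sq_sqrt hSnn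
        have hsx : ∑ j, x j ^ 2 ≤ q * x i ^ 2 := by
          calc ∑ j, x j ^ 2 ≤ ∑ _j : Fin q, x i ^ 2 :=
              Finset.sum_le_sum fun j _ => hi j (Finset.mem_univ j)
            _ = q * x i ^ 2 := by
              rw [Finset.sum_const, Finset.card_univ, Fintype.card_fin, nsmul_eq_mul]
        have hxnn : 0 ≤ ∑ j, x j ^ 2 := Finset.sum_nonneg fun j _ => sq_nonneg _
        calc C * ∑ j, x j ^ 2 ≤ max C 0 * ∑ j, x j ^ 2 :=
            mul_le_mul_of_nonneg_right (le_max_left C 0) hxnn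
          _ ≤ max C 0 * (q * x i ^ 2) :=
            mul_le_mul_of_nonneg_left hsx (le_max_right C 0)
          _ = x i ^ 2 * (q * max C 0) := by ring
          _ ≤ x i ^ 2 * S := mul_le_mul_of_nonneg_left (hM2.trans hr2) (sq_nonneg _)
          _ = ∑ k ∈ Finset.range n, (∑ j, x j * f j k) ^ 2 := hq1.symm
end

section
/- Let $\mathbf{y}$ be a weakly stationary sequence with bounded spectral density and Wold decomposition $\mathbf{y} = \hat{\mathbf{y}} + \check{\mathbf{y}}$ into purely deterministic and purely nondeterministic parts. Then the aggregation subspace satisfies $\mathcal{G}(\mathbf{y}) \subseteq H_\infty(\mathbf{y})$, the remote future subspace. -/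
open Filter MeasureTheory
open scoped RealInnerProductSpace

/-- let `y` be weakly stationary with Wold decomposition
`y = ŷ + y̌` into a purely deterministic part `ŷ` (lying in the remote future
subspace `H_∞(y) = ⋂ₖ span{y(s) : s ≥ k}`) and a purely nondeterministic part `y̌`
with bounded spectral density (expressed via the boundedness of its covariance
operator, by Szegő's theorem). Then the aggregation subspace satisfies
`𝒢(y) ⊆ H_∞(y)`: every `L²`-limit `z` along an averaging sequence lies in `H_∞(y)`. -/
theorem aggregation_subspace_subset_remote_future
    {Ω : Type*} [MeasurableSpace Ω] (μ : Measure Ω) [IsProbabilityMeasure μ]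
    (y yhat ycheck : ℕ → Lp ℝ 2 μ)
    (hmean : ∀ k, ∫ ω, (y k : Ω → ℝ) ω ∂μ = 0)
    (hstat : ∀ k j m : ℕ, ⟪y (k + m), y (j + m)⟫ = ⟪y k, y j⟫)
    (hwold : ∀ k, y k = yhat k + ycheck k)
    (hhatmem : ∀ k, yhat k ∈
      ⨅ m : ℕ, (Submodule.span ℝ {v : Lp ℝ 2 μ | ∃ s, m ≤ s ∧ v = y s}).topologicalClosure)
    (horth : ∀ k j, ⟪yhat k, ycheck j⟫ = 0)
    (hcheckbdd : ∃ M : ℝ, ∀ (n : ℕ) (x : ℕ → ℝ),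
      ‖∑ k ∈ Finset.range n, x k • ycheck k‖ ^ 2 ≤ M * ∑ k ∈ Finset.range n, x k ^ 2)
    (a : ℕ → ℕ → ℝ) (s : ℕ → Lp ℝ 2 μ) (z : Lp ℝ 2 μ)
    (ha2 : ∀ n, Memℓp (a n) 2)
    (hAS : Tendsto (fun n => ∑' k, (a n k) ^ 2) atTop (nhds 0))
    (hs : ∀ n, Tendsto (fun N => ∑ k ∈ Finset.range N, a n k • y k) atTop (nhds (s n)))
    (hz : Tendsto s atTop (nhds z)) :
    z ∈ ⨅ m : ℕ,
      (Submodule.span ℝ {v : Lp ℝ 2 μ | ∃ s', m ≤ s' ∧ v = y s'}).topologicalClosure := by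
  obtain ⟨M, hM⟩ := hcheckbdd
  set M' : ℝ := max M 0 with hM'def
  have hM'nonneg : 0 ≤ M' := le_max_right _ _
  have hM' : ∀ (n : ℕ) (x : ℕ → ℝ),
      ‖∑ k ∈ Finset.range n, x k • ycheck k‖ ^ 2 ≤ M' * ∑ k ∈ Finset.range n, x k ^ 2 := by
    intro n x
    refine (hM n x).trans (mul_le_mul_of_nonneg_right (le_max_left _ _) ?_)
    exact Finset.sum_nonneg fun k _ => sq_nonneg _
  -- summability of squares
  have hsum : ∀ n, Summable (fun k => (a n k) ^ 2) := by
    intro n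
    have h := (ha2 n).summable (by norm_num : (0:ℝ) < (2 : ENNReal).toReal)
    refine h.congr fun k => ?_
    have : (2 : ENNReal).toReal = ((2 : ℕ) : ℝ) := by norm_num
    rw [this, Real.rpow_natCast]
    simp [sq_abs, Real.norm_eq_abs]
  have hTnonneg : ∀ n, 0 ≤ ∑' k, (a n k) ^ 2 := fun n =>
    tsum_nonneg fun k => sq_nonneg _
  rw [Submodule.mem_iInf]
  intro m
  set S := (Submodule.span ℝ {v : Lp ℝ 2 μ | ∃ s', m ≤ s' ∧ v = y s'}).topologicalClosure with hS
  have hSclosed : IsClosed (S : Set (Lp ℝ 2 μ)) := Submodule.isClosed_topologicalClosure _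
  have hSne : (S : Set (Lp ℝ 2 μ)).Nonempty := ⟨0, S.zero_mem⟩
  have hhatS : ∀ k, yhat k ∈ S := fun k => (Submodule.mem_iInf _).mp (hhatmem k) m
  -- bound dist of each s n to S
  have key : ∀ n, Metric.infDist (s n) (S : Set (Lp ℝ 2 μ)) ≤
      Real.sqrt (M' * ∑' k, (a n k) ^ 2) := by
    intro n
    have hcont : Tendsto (fun N => Metric.infDist (∑ k ∈ Finset.range N, a n k • y k)
        (S : Set (Lp ℝ 2 μ))) atTop (nhds (Metric.infDist (s n) (S : Set (Lp ℝ 2 μ)))) :=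
      ((Metric.continuous_infDist_pt _).tendsto _).comp (hs n)
    refine le_of_tendsto hcont (Eventually.of_forall fun N => ?_)
    have hmem : (∑ k ∈ Finset.range N, a n k • yhat k) ∈ S :=
      Submodule.sum_mem _ fun k _ => S.smul_mem _ (hhatS k)
    have hdist : Metric.infDist (∑ k ∈ Finset.range N, a n k • y k) (S : Set (Lp ℝ 2 μ)) ≤
        ‖∑ k ∈ Finset.range N, a n k • ycheck k‖ := by
      have := Metric.infDist_le_dist_of_mem (x := ∑ k ∈ Finset.range N, a n k • y k) hmem
      refine this.trans_eq ?_
      rw [dist_eq_norm]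
      congr 1
      rw [← Finset.sum_sub_distrib]
      refine Finset.sum_congr rfl fun k _ => ?_
      rw [hwold k, smul_add]
      abel
    refine hdist.trans ?_
    have h1 : ‖∑ k ∈ Finset.range N, a n k • ycheck k‖ ^ 2 ≤ M' * ∑' k, (a n k) ^ 2 := by
      refine (hM' N (a n)).trans (mul_le_mul_of_nonneg_left ?_ hM'nonneg)
      exact Summable.sum_le_tsum _ (fun k _ => sq_nonneg _) (hsum n)
    calc ‖∑ k ∈ Finset.range N, a n k • ycheck k‖
        = Real.sqrt (‖∑ k ∈ Finset.range N, a n k • ycheck k‖ ^ 2) :=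
          (Real.sqrt_sq (norm_nonneg _)).symm
      _ ≤ Real.sqrt (M' * ∑' k, (a n k) ^ 2) := Real.sqrt_le_sqrt h1
  -- now bound dist of z
  have hzd : ∀ n, Metric.infDist z (S : Set (Lp ℝ 2 μ)) ≤
      dist z (s n) + Real.sqrt (M' * ∑' k, (a n k) ^ 2) := by
    intro n
    have := Metric.infDist_le_infDist_add_dist (x := z) (y := s n)
      (s := (S : Set (Lp ℝ 2 μ)))
    refine this.trans ?_
    rw [add_comm]
    exact add_le_add le_rfl (key n)
  have hlim : Tendsto (fun n => dist z (s n) + Real.sqrt (M' * ∑' k, (a n k) ^ 2))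
      atTop (nhds 0) := by
    have h1 : Tendsto (fun n => dist z (s n)) atTop (nhds 0) := by
      have := hz.dist (tendsto_const_nhds (x := z))
      simpa [dist_comm] using this
    have h2 : Tendsto (fun n => Real.sqrt (M' * ∑' k, (a n k) ^ 2)) atTop (nhds 0) := by
      have hmul : Tendsto (fun n => M' * ∑' k, (a n k) ^ 2) atTop (nhds 0) := by
        simpa using hAS.const_mul M'
      have := (Real.continuous_sqrt.tendsto 0).comp hmul
      simpa [Function.comp_def] using this
    simpa using h1.add h2
  have hle : Metric.infDist z (S : Set (Lp ℝ 2 μ)) ≤ 0 :=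
    ge_of_tendsto hlim (Eventually.of_forall hzd)
  have h0 : Metric.infDist z (S : Set (Lp ℝ 2 μ)) = 0 :=
    le_antisymm hle (Metric.infDist_nonneg)
  exact ((hSclosed.mem_iff_infDist_zero hSne).mpr h0)
end
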